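/- Let d ≥ 2 and h : ℤ → ℤ satisfy h(n) = (l·n + l_b)/d whenever n ≡ b (mod d), where gcd(l,d) = 1 and l_b ≡ -l·b (mod d) for 0 ≤ b ≤ d-1. Then for each k ≥ 1, the set of integers n such that h^(j)(n) ≢ 0 (mod d) for all 1 ≤ j ≤ k is a union of exactly d·(d-1)^k residue classes modulo d^{k+1}. -/

import Mathlib

open scoped Classical

namespace PLSurvAux

/-- Survival predicate: all iterates `h^[j] n` for `j < m` are nonzero mod `d`. -/
def surv (d : ℕ) (h : ℤ → ℤ) (m : ℕ) (n : ℤ) : Prop :=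
  ∀ j < m, ¬ (d : ℤ) ∣ h^[j] n

lemma step_congr {d : ℕ} {l : ℤ} {L : ℤ → ℤ} {h : ℤ → ℤ} (hd : 2 ≤ d)
    (hh : ∀ n : ℤ, (d : ℤ) * h n = l * n + L (n % d))
    {m : ℕ} {n n' : ℤ} (hnn : ((d : ℤ) ^ (m + 1)) ∣ n - n') :
    ((d : ℤ) ^ m) ∣ h n - h n' := by
  have hd0 : (d : ℤ) ≠ 0 := by positivity
  have hdd : (d : ℤ) ∣ n - n' :=
    dvd_trans (dvd_pow_self (d : ℤ) (Nat.succ_ne_zero m)) hnn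
  have hmod : n % d = n' % d := Int.ModEq.symm (Int.modEq_iff_dvd.mpr hdd)
  have key : (d : ℤ) * (h n - h n') = l * (n - n') := by
    have h1 := hh n; have h2 := hh n'
    rw [hmod] at h1
    ring_nf
    ring_nf at h1 h2
    omega
  have : (d : ℤ) * (d : ℤ) ^ m ∣ (d : ℤ) * (h n - h n') := by
    rw [key]
    exact dvd_mul_of_dvd_right (by rw [← pow_succ'] ; exact hnn) l
  exact (mul_dvd_mul_iff_left hd0).mp this

lemma iter_congr {d : ℕ} {l : ℤ} {L : ℤ → ℤ} {h : ℤ → ℤ} (hd : 2 ≤ d)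
    (hh : ∀ n : ℤ, (d : ℤ) * h n = l * n + L (n % d)) :
    ∀ (j m : ℕ) {n n' : ℤ}, ((d : ℤ) ^ (m + j)) ∣ n - n' →
      ((d : ℤ) ^ m) ∣ h^[j] n - h^[j] n' := by
  intro j
  induction j with
  | zero => intro m n n' hnn; simpa using hnn
  | succ j ih =>
    intro m n n' hnn
    rw [Function.iterate_succ_apply, Function.iterate_succ_apply]
    apply ih
    exact step_congr hd hh (m := m + j) (by rwa [show m + (j+1) = (m+j) + 1 by ring] at hnn)

lemma inj_step {d : ℕ} {l : ℤ} {L : ℤ → ℤ} {h : ℤ → ℤ} (hd : 2 ≤ d)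
    (hl : IsCoprime l (d : ℤ))
    (hh : ∀ n : ℤ, (d : ℤ) * h n = l * n + L (n % d))
    {m : ℕ} {n n' : ℤ} (h1 : (d : ℤ) ∣ n - n') (h2 : ((d : ℤ) ^ m) ∣ h n - h n') :
    ((d : ℤ) ^ (m + 1)) ∣ n - n' := by
  have hmod : n % d = n' % d := Int.ModEq.symm (Int.modEq_iff_dvd.mpr h1)
  have key : (d : ℤ) * (h n - h n') = l * (n - n') := by
    have h1' := hh n; have h2' := hh n'
    rw [hmod] at h1'
    ring_nf; ring_nf at h1' h2'; omega
  have hdvd : (d : ℤ) ^ (m + 1) ∣ l * (n - n') := by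
    rw [← key, pow_succ']
    exact mul_dvd_mul_left _ h2
  have hcop : IsCoprime ((d : ℤ) ^ (m + 1)) l := (hl.symm.pow_left)
  exact hcop.dvd_of_dvd_mul_left hdvd

/-- The integer `n` is congruent to the cast of `(n : ZMod N).val` mod `N`. -/
lemma val_congr (N : ℕ) [NeZero N] (n : ℤ) :
    (N : ℤ) ∣ n - (((n : ZMod N).val : ℕ) : ℤ) := by
  have : ((n - (((n : ZMod N).val : ℕ) : ℤ) : ℤ) : ZMod N) = 0 := by
    push_cast
    rw [ZMod.natCast_val, ZMod.cast_id]
    exact sub_self _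
  exact (ZMod.intCast_zmod_eq_zero_iff_dvd _ _).mp this

lemma surv_succ_iff {d : ℕ} {h : ℤ → ℤ} {m : ℕ} {n : ℤ} :
    surv d h (m + 1) n ↔ (¬ (d : ℤ) ∣ n) ∧ surv d h m (h n) := by
  constructor
  · intro hs
    refine ⟨by simpa using hs 0 (Nat.succ_pos m), fun j hj => ?_⟩
    have := hs (j + 1) (by omega)
    rwa [Function.iterate_succ_apply] at this
  · rintro ⟨h0, hs⟩ j hj
    match j with
    | 0 => simpa using h0
    | j + 1 =>
      rw [Function.iterate_succ_apply]
      exact hs j (by omega)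

lemma countA {d : ℕ} {l : ℤ} {L : ℤ → ℤ} {h : ℤ → ℤ} (hd : 2 ≤ d)
    (hl : IsCoprime l (d : ℤ))
    (hh : ∀ n : ℤ, (d : ℤ) * h n = l * n + L (n % d)) (m : ℕ) :
    ∃ A : Finset (ZMod (d ^ m)), A.card = (d - 1) ^ m ∧
      ∀ n : ℤ, (surv d h m n ↔ (n : ZMod (d ^ m)) ∈ A) := by
  haveI : NeZero d := ⟨by omega⟩
  induction m with
  | zero =>
    refine ⟨Finset.univ, ?_, ?_⟩
    · rw [Finset.card_univ, ZMod.card]; simp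
    · intro n
      constructor
      · intro _; exact Finset.mem_univ _
      · intro _ j hj; omega
  | succ m ih =>
    obtain ⟨A, hcard, hmem⟩ := ih
    haveI : NeZero (d ^ m) := ⟨pow_ne_zero _ (by omega)⟩
    haveI : NeZero (d ^ (m + 1)) := ⟨pow_ne_zero _ (by omega)⟩
    set F : ZMod (d ^ (m + 1)) → ZMod d × ZMod (d ^ m) :=
      fun c => ((((c.val : ℕ) : ℤ) : ZMod d), ((h ((c.val : ℕ) : ℤ) : ℤ) : ZMod (d ^ m))) with hF
    have hinj : Function.Injective F := by
      intro c c' hcc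
      have hfst : ((((c.val : ℕ) : ℤ)) : ZMod d) = ((((c'.val : ℕ) : ℤ)) : ZMod d) :=
        congrArg Prod.fst hcc
      have hsnd : ((h ((c.val : ℕ) : ℤ) : ℤ) : ZMod (d ^ m)) = ((h ((c'.val : ℕ) : ℤ) : ℤ) : ZMod (d ^ m)) :=
        congrArg Prod.snd hcc
      have h1 : (d : ℤ) ∣ ((c.val : ℕ) : ℤ) - ((c'.val : ℕ) : ℤ) := by
        have := Int.ModEq.dvd ((ZMod.intCast_eq_intCast_iff _ _ _).mp hfst)
        have := dvd_sub_comm.mp this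
        push_cast at this ⊢
        exact this
      have h2 : ((d : ℤ) ^ m) ∣ h ((c.val : ℕ) : ℤ) - h ((c'.val : ℕ) : ℤ) := by
        have := Int.ModEq.dvd ((ZMod.intCast_eq_intCast_iff _ _ _).mp hsnd)
        have := dvd_sub_comm.mp this
        push_cast at this ⊢
        exact this
      have h3 := inj_step hd hl hh h1 h2
      have h4 : ((((c.val : ℕ) : ℤ)) : ZMod (d ^ (m + 1))) = ((((c'.val : ℕ) : ℤ)) : ZMod (d ^ (m + 1))) := by
        rw [ZMod.intCast_eq_intCast_iff]
        refine Int.ModEq.symm ?_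
        rw [Int.modEq_iff_dvd]
        push_cast
        exact h3
      push_cast at h4
      rwa [ZMod.natCast_val, ZMod.cast_id, ZMod.natCast_val, ZMod.cast_id] at h4
    have hbij : Function.Bijective F := by
      rw [Fintype.bijective_iff_injective_and_card]
      refine ⟨hinj, ?_⟩
      simp [ZMod.card, pow_succ']
    set e := Equiv.ofBijective F hbij with he
    set T : Finset (ZMod d × ZMod (d ^ m)) :=
      (Finset.univ.filter (fun x : ZMod d => x ≠ 0)) ×ˢ A with hT
    refine ⟨T.map e.symm.toEmbedding, ?_, ?_⟩
    · rw [Finset.card_map, hT, Finset.card_product, hcard, Finset.filter_ne',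
        Finset.card_erase_of_mem (Finset.mem_univ _), Finset.card_univ, ZMod.card,
        pow_succ']
    · intro n
      set v : ℤ := (((n : ZMod (d ^ (m + 1))).val : ℕ) : ℤ) with hv
      have hvc : ((d : ℤ) ^ (m + 1)) ∣ n - v := by
        have := val_congr (d ^ (m + 1)) n
        push_cast at this
        exact this
      have hmm : (n : ZMod (d ^ (m + 1))) ∈ T.map e.symm.toEmbedding ↔ F (n : ZMod (d ^ (m + 1))) ∈ T := by
        rw [Finset.mem_map_equiv, e.symm_symm]
        rfl
      rw [hmm]
      have hFval : F (n : ZMod (d ^ (m + 1))) = ((v : ZMod d), ((h v : ℤ) : ZMod (d ^ m))) := rfl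
      rw [hFval, hT, Finset.mem_product, Finset.mem_filter]
      have hd1 : ((v : ZMod d)) = ((n : ℤ) : ZMod d) := by
        rw [ZMod.intCast_eq_intCast_iff]
        refine Int.ModEq.symm ?_
        rw [Int.modEq_iff_dvd]
        exact dvd_sub_comm.mp (dvd_trans (dvd_pow_self (d : ℤ) (Nat.succ_ne_zero m)) hvc)
      have hd2 : ((h v : ℤ) : ZMod (d ^ m)) = ((h n : ℤ) : ZMod (d ^ m)) := by
        rw [ZMod.intCast_eq_intCast_iff]
        refine Int.ModEq.symm ?_
        rw [Int.modEq_iff_dvd]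
        push_cast
        exact dvd_sub_comm.mp (step_congr hd hh (m := m) hvc)
      rw [hd1, hd2, surv_succ_iff]
      constructor
      · rintro ⟨h0, hs⟩
        refine ⟨⟨Finset.mem_univ _, ?_⟩, (hmem (h n)).mp hs⟩
        rw [Ne, ZMod.intCast_zmod_eq_zero_iff_dvd]
        exact h0
      · rintro ⟨⟨-, h0⟩, hs⟩
        rw [Ne, ZMod.intCast_zmod_eq_zero_iff_dvd] at h0
        exact ⟨h0, (hmem (h n)).mpr hs⟩

end PLSurvAux

/-- Theorem 5.2 part (1)-type statement: let `d ≥ 2`, `gcd(l,d) = 1`, and let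
`h : ℤ → ℤ` satisfy `d * h n = l * n + L (n % d)` where `L b ≡ -l*b (mod d)` for
`0 ≤ b < d`. Then for each `k ≥ 1`, the set of integers `n` with
`h^(j)(n) ≢ 0 (mod d)` for all `1 ≤ j ≤ k` is a union of exactly `d (d-1)^k`
residue classes modulo `d^(k+1)`. -/
theorem periodically_linear_survivors_residue_classes
    (d : ℕ) (hd : 2 ≤ d) (l : ℤ) (hl : IsCoprime l (d : ℤ))
    (L : ℤ → ℤ) (hL : ∀ b : ℤ, 0 ≤ b → b < d → (d : ℤ) ∣ L b + l * b)
    (h : ℤ → ℤ) (hh : ∀ n : ℤ, (d : ℤ) * h n = l * n + L (n % d))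
    (k : ℕ) (hk : 1 ≤ k) :
    ∃ S : Finset (ZMod (d ^ (k + 1))), S.card = d * (d - 1) ^ k ∧
      ∀ n : ℤ, ((∀ j : ℕ, 1 ≤ j → j ≤ k → ¬ (d : ℤ) ∣ h^[j] n)
        ↔ (n : ZMod (d ^ (k + 1))) ∈ S) := by
  classical
  haveI : NeZero d := ⟨by omega⟩
  haveI : NeZero (d ^ k) := ⟨pow_ne_zero _ (by omega)⟩
  haveI : NeZero (d ^ (k + 1)) := ⟨pow_ne_zero _ (by omega)⟩
  obtain ⟨A, hcard, hmem⟩ := PLSurvAux.countA hd hl hh (L := L) k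
  set F : ZMod (d ^ (k + 1)) → ZMod d × ZMod (d ^ k) :=
    fun c => ((((c.val : ℕ) : ℤ) : ZMod d), ((h ((c.val : ℕ) : ℤ) : ℤ) : ZMod (d ^ k))) with hF
  have hinj : Function.Injective F := by
    intro c c' hcc
    have hfst : ((((c.val : ℕ) : ℤ)) : ZMod d) = ((((c'.val : ℕ) : ℤ)) : ZMod d) :=
      congrArg Prod.fst hcc
    have hsnd : ((h ((c.val : ℕ) : ℤ) : ℤ) : ZMod (d ^ k)) = ((h ((c'.val : ℕ) : ℤ) : ℤ) : ZMod (d ^ k)) :=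
      congrArg Prod.snd hcc
    have h1 : (d : ℤ) ∣ ((c.val : ℕ) : ℤ) - ((c'.val : ℕ) : ℤ) := by
      have := Int.ModEq.dvd ((ZMod.intCast_eq_intCast_iff _ _ _).mp hfst)
      have := dvd_sub_comm.mp this
      push_cast at this ⊢
      exact this
    have h2 : ((d : ℤ) ^ k) ∣ h ((c.val : ℕ) : ℤ) - h ((c'.val : ℕ) : ℤ) := by
      have := Int.ModEq.dvd ((ZMod.intCast_eq_intCast_iff _ _ _).mp hsnd)
      have := dvd_sub_comm.mp this
      push_cast at this ⊢
      exact this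
    have h3 := PLSurvAux.inj_step hd hl hh h1 h2
    have h4 : ((((c.val : ℕ) : ℤ)) : ZMod (d ^ (k + 1))) = ((((c'.val : ℕ) : ℤ)) : ZMod (d ^ (k + 1))) := by
      rw [ZMod.intCast_eq_intCast_iff]
      refine Int.ModEq.symm ?_
      rw [Int.modEq_iff_dvd]
      push_cast
      exact h3
    push_cast at h4
    rwa [ZMod.natCast_val, ZMod.cast_id, ZMod.natCast_val, ZMod.cast_id] at h4
  have hbij : Function.Bijective F := by
    rw [Fintype.bijective_iff_injective_and_card]
    refine ⟨hinj, ?_⟩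
    simp [ZMod.card, pow_succ']
  set e := Equiv.ofBijective F hbij with he
  set T : Finset (ZMod d × ZMod (d ^ k)) := Finset.univ ×ˢ A with hT
  refine ⟨T.map e.symm.toEmbedding, ?_, ?_⟩
  · rw [Finset.card_map, hT, Finset.card_product, hcard, Finset.card_univ, ZMod.card]
  · intro n
    set v : ℤ := (((n : ZMod (d ^ (k + 1))).val : ℕ) : ℤ) with hv
    have hvc : ((d : ℤ) ^ (k + 1)) ∣ n - v := by
      have := PLSurvAux.val_congr (d ^ (k + 1)) n
      push_cast at this
      exact this
    have hmm : (n : ZMod (d ^ (k + 1))) ∈ T.map e.symm.toEmbedding ↔ F (n : ZMod (d ^ (k + 1))) ∈ T := by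
      rw [Finset.mem_map_equiv, e.symm_symm]
      rfl
    rw [hmm]
    have hFval : F (n : ZMod (d ^ (k + 1))) = ((v : ZMod d), ((h v : ℤ) : ZMod (d ^ k))) := rfl
    rw [hFval, hT, Finset.mem_product]
    have hd2 : ((h v : ℤ) : ZMod (d ^ k)) = ((h n : ℤ) : ZMod (d ^ k)) := by
      rw [ZMod.intCast_eq_intCast_iff]
      refine Int.ModEq.symm ?_
      rw [Int.modEq_iff_dvd]
      push_cast
      exact dvd_sub_comm.mp (PLSurvAux.step_congr hd hh (m := k) hvc)
    rw [hd2]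
    constructor
    · intro hall
      refine ⟨Finset.mem_univ _, (hmem (h n)).mp ?_⟩
      intro j hj
      have := hall (j + 1) (by omega) (by omega)
      rwa [Function.iterate_succ_apply] at this
    · rintro ⟨-, hs⟩ j hj1 hj2
      have hs' := (hmem (h n)).mpr hs
      match j, hj1 with
      | j + 1, _ =>
        rw [Function.iterate_succ_apply]
        exact hs' j (by omega)
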